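/- The density π^A(θ) = -e^{θ-θ₀} log(1 - e^{θ₀-θ}) - 1 on (θ₀,∞) satisfies ∫_{θ₀}^∞ e^{θ} π^A(θ) dθ = ∞ (condition (irrcs) with k = 1), and hence yields evidence-consistent Bayes factors for all n ≥ 1. -/

import Mathlib

open Real MeasureTheory Set Filter

lemma log_bound (u : ℝ) (h0 : 0 < u) (h1 : u < 1) :
    u + u^2/2 ≤ -Real.log (1-u) := by
  have hle : (1:ℝ) - u ≤ 1 := by linarith
  have hinv : IntervalIntegrable (fun t : ℝ => t⁻¹) volume (1-u) 1 := by
    apply ContinuousOn.intervalIntegrable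
    apply ContinuousOn.inv₀ continuousOn_id
    intro t ht
    rw [uIcc_of_le hle] at ht
    have := ht.1
    simp only [id]
    intro h; rw [h] at this; linarith
  have hpoly : IntervalIntegrable (fun t : ℝ => 2 - t) volume (1-u) 1 :=
    (continuous_const.sub continuous_id).intervalIntegrable _ _
  have hmono : ∫ t in (1-u)..1, (2 - t) ≤ ∫ t in (1-u)..1, t⁻¹ := by
    apply intervalIntegral.integral_mono_on hle hpoly hinv
    intro t ht
    have ht0 : 0 < t := by linarith [ht.1]
    rw [← sub_nonneg]
    have : t⁻¹ - (2 - t) = (1-t)^2 / t := by field_simp; ring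
    rw [this]
    positivity
  have hinvval : ∫ t in (1-u)..1, t⁻¹ = -Real.log (1-u) := by
    rw [integral_inv]
    · rw [one_div, Real.log_inv]
    · rw [uIcc_of_le hle]
      intro h
      linarith [h.1]
  have hpolyval : ∫ t in (1-u)..1, (2 - t) = u + u^2/2 := by
    rw [intervalIntegral.integral_sub (intervalIntegrable_const)
      ((continuous_id'.intervalIntegrable _ _ : IntervalIntegrable (fun t : ℝ => t) volume _ _)),
      intervalIntegral.integral_const, integral_id]
    simp [smul_eq_mul]
    ring
  rw [hinvval, hpolyval] at hmono
  exact hmono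

/-- Pointwise lower bound for the density. -/
lemma density_lb (θ₀ θ : ℝ) (h : θ₀ < θ) :
    Real.exp (θ₀ - θ) / 2 ≤
      -Real.exp (θ - θ₀) * Real.log (1 - Real.exp (θ₀ - θ)) - 1 := by
  set u := Real.exp (θ₀ - θ) with hu
  have h0 : 0 < u := Real.exp_pos _
  have h1 : u < 1 := by
    rw [hu]
    exact Real.exp_lt_one_iff.mpr (by linarith)
  have key := log_bound u h0 h1
  have hprod : Real.exp (θ - θ₀) * u = 1 := by
    rw [hu, ← Real.exp_add]
    simp
  have hE : 0 < Real.exp (θ - θ₀) := Real.exp_pos _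
  nlinarith [mul_le_mul_of_nonneg_left key (le_of_lt hE)]

/-- The density `π^A(θ) = -e^{θ-θ₀} log(1-e^{θ₀-θ}) - 1` on `(θ₀,∞)` satisfies
`∫_{θ₀}^∞ e^θ π^A(θ) dθ = ∞` (condition (irrcs) with `k = 1`), and hence yields
evidence-consistent Bayes factors for all `n ≥ 1`. -/
theorem arithmetic_intrinsic_prior_evidence_consistent (θ₀ : ℝ) :
    ¬ IntegrableOn
        (fun θ : ℝ => Real.exp θ *
          (-Real.exp (θ - θ₀) * Real.log (1 - Real.exp (θ₀ - θ)) - 1))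
        (Set.Ioi θ₀) ∧
    ∀ n : ℕ, 1 ≤ n →
      Tendsto (fun T : ℝ =>
          ∫⁻ θ in Set.Ioc θ₀ T, ENNReal.ofReal (Real.exp ((n:ℝ) * (θ - θ₀)) *
            (-Real.exp (θ - θ₀) * Real.log (1 - Real.exp (θ₀ - θ)) - 1)))
        atTop (nhds ⊤) := by
  constructor
  · intro hI
    have hconst : IntegrableOn (fun _ : ℝ => Real.exp θ₀ / 2) (Set.Ioi θ₀) := by
      apply Integrable.mono' hI
      · exact aestronglyMeasurable_const
      · apply ae_restrict_of_forall_mem measurableSet_Ioi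
        intro θ hθ
        rw [Real.norm_eq_abs, abs_of_pos (by positivity)]
        have hlb := density_lb θ₀ θ hθ
        have hE : 0 < Real.exp θ := Real.exp_pos _
        have h2 : Real.exp θ * (Real.exp (θ₀ - θ) / 2) = Real.exp θ₀ / 2 := by
          rw [mul_div_assoc']
          congr 1
          rw [← Real.exp_add]
          congr 1
          ring
        calc Real.exp θ₀ / 2 = Real.exp θ * (Real.exp (θ₀ - θ) / 2) := h2.symm
          _ ≤ _ := by
              exact mul_le_mul_of_nonneg_left hlb (le_of_lt hE)
    rw [integrableOn_const_iff, enorm_eq_zero] at hconst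
    rcases hconst with h | h
    · have : (0:ℝ) < Real.exp θ₀ / 2 := by positivity
      linarith [this, h ▸ this]
    · rw [Real.volume_Ioi] at h
      exact (lt_irrefl _ h)
  · intro n hn
    apply tendsto_nhds_top_mono
      (f := fun T : ℝ => ENNReal.ofReal ((T - θ₀) / 2))
    · have h1 : Tendsto (fun T : ℝ => (T - θ₀) / 2) atTop atTop :=
        (tendsto_atTop_add_const_right _ (-θ₀) tendsto_id).atTop_div_const (by norm_num)
      exact ENNReal.tendsto_ofReal_atTop.comp h1
    · filter_upwards with T
      by_cases hT : θ₀ < T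
      · have hbound : ∀ θ ∈ Set.Ioc θ₀ T,
            ENNReal.ofReal (1/2) ≤ ENNReal.ofReal (Real.exp ((n:ℝ) * (θ - θ₀)) *
              (-Real.exp (θ - θ₀) * Real.log (1 - Real.exp (θ₀ - θ)) - 1)) := by
          intro θ hθ
          apply ENNReal.ofReal_le_ofReal
          have hlb := density_lb θ₀ θ hθ.1
          have hE1 : 1 ≤ Real.exp ((n:ℝ) * (θ - θ₀) + (θ₀ - θ)) := by
            rw [Real.one_le_exp_iff]
            have hn1 : (1:ℝ) ≤ (n:ℝ) := by exact_mod_cast hn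
            nlinarith [hθ.1]
          have heq : Real.exp ((n:ℝ) * (θ - θ₀)) * (Real.exp (θ₀ - θ) / 2)
              = Real.exp ((n:ℝ) * (θ - θ₀) + (θ₀ - θ)) / 2 := by
            rw [Real.exp_add]; ring
          calc (1:ℝ)/2 ≤ Real.exp ((n:ℝ) * (θ - θ₀) + (θ₀ - θ)) / 2 := by linarith
            _ = Real.exp ((n:ℝ) * (θ - θ₀)) * (Real.exp (θ₀ - θ) / 2) := heq.symm
            _ ≤ _ := mul_le_mul_of_nonneg_left hlb (le_of_lt (Real.exp_pos _))
        calc ENNReal.ofReal ((T - θ₀) / 2)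
            = ENNReal.ofReal (1/2) * ENNReal.ofReal (T - θ₀) := by
              rw [← ENNReal.ofReal_mul (by norm_num)]
              congr 1
              ring
          _ = ∫⁻ _ in Set.Ioc θ₀ T, ENNReal.ofReal (1/2) := by
              rw [setLIntegral_const, Real.volume_Ioc]
          _ ≤ _ := setLIntegral_mono' measurableSet_Ioc hbound
      · have : Set.Ioc θ₀ T = ∅ := Set.Ioc_eq_empty (by linarith)
        rw [this]
        simp [ENNReal.ofReal_eq_zero.mpr (by linarith : (T - θ₀)/2 ≤ 0)]
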